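/- Let a₁, a₂, a₃ be positive integers with gcd(a₁, a₂, a₃) = 1 and each a_i ≥ 2, let F be the Frobenius number of the numerical semigroup ⟨a₁, a₂, a₃⟩, and set f = F + a₁ + a₂ + a₃. Then f ≥ √(3·a₁·a₂·a₃) (Davison's lower bound). -/

import Mathlib

namespace DavisonAux

/-- `Good a b c y z` says `(y,z)` is the chosen (lex-min) minimizer of its class mod `a`:
its value `y*b+z*c` is minimal among all `y'*b+z'*c` in the same residue class mod `a`,
with ties broken by minimal first coordinate. -/
def Good (a b c y z : ℕ) : Prop :=
  ∀ y' z' : ℕ, y' * b + z' * c ≡ y * b + z * c [MOD a] →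
    y * b + z * c < y' * b + z' * c ∨ (y * b + z * c = y' * b + z' * c ∧ y ≤ y')

lemma mem_closure_triple (a b c n : ℕ) :
    n ∈ AddSubmonoid.closure ({a, b, c} : Set ℕ) ↔ ∃ x y z : ℕ, n = x * a + y * b + z * c := by
  constructor
  · intro hn
    induction hn using AddSubmonoid.closure_induction with
    | mem w hw =>
      rcases hw with h | h | h
      · exact ⟨1, 0, 0, by simp [h]⟩
      · exact ⟨0, 1, 0, by simp [h]⟩
      · exact ⟨0, 0, 1, by simp at h; simp [h]⟩
    | zero => exact ⟨0, 0, 0, by simp⟩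
    | add x y hx hy ihx ihy =>
      obtain ⟨x1, y1, z1, rfl⟩ := ihx
      obtain ⟨x2, y2, z2, rfl⟩ := ihy
      exact ⟨x1 + x2, y1 + y2, z1 + z2, by ring⟩
  · rintro ⟨x, y, z, rfl⟩
    have ha : a ∈ AddSubmonoid.closure ({a, b, c} : Set ℕ) :=
      AddSubmonoid.subset_closure (by simp)
    have hb : b ∈ AddSubmonoid.closure ({a, b, c} : Set ℕ) :=
      AddSubmonoid.subset_closure (by simp)
    have hc : c ∈ AddSubmonoid.closure ({a, b, c} : Set ℕ) :=
      AddSubmonoid.subset_closure (by simp)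
    have hxa : x * a ∈ AddSubmonoid.closure ({a, b, c} : Set ℕ) := by
      simpa [nsmul_eq_mul] using AddSubmonoid.nsmul_mem _ ha x
    have hyb : y * b ∈ AddSubmonoid.closure ({a, b, c} : Set ℕ) := by
      simpa [nsmul_eq_mul] using AddSubmonoid.nsmul_mem _ hb y
    have hzc : z * c ∈ AddSubmonoid.closure ({a, b, c} : Set ℕ) := by
      simpa [nsmul_eq_mul] using AddSubmonoid.nsmul_mem _ hc z
    exact add_mem (add_mem hxa hyb) hzc

/-- existence of the lex-min minimizer in any class -/
lemma good_exists (a b c y₀ z₀ : ℕ) :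
    ∃ y z, Good a b c y z ∧ y * b + z * c ≡ y₀ * b + z₀ * c [MOD a] := by
  classical
  have hex : ∃ n, ∃ y z : ℕ, y * b + z * c = n ∧ n ≡ y₀ * b + z₀ * c [MOD a] :=
    ⟨y₀ * b + z₀ * c, y₀, z₀, rfl, Nat.ModEq.refl _⟩
  set m := Nat.find hex with hm
  obtain ⟨ym, zm, hval, hcong⟩ := Nat.find_spec hex
  have hex2 : ∃ y, ∃ z : ℕ, y * b + z * c = m := ⟨ym, zm, hval⟩
  set Y := Nat.find hex2 with hY
  obtain ⟨Z, hYZ⟩ := Nat.find_spec hex2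
  refine ⟨Y, Z, ?_, by rw [hYZ]; exact hcong⟩
  intro y' z' hc'
  have hYc : Y * b + Z * c ≡ y₀ * b + z₀ * c [MOD a] := by rw [hYZ]; exact hcong
  have hmle : m ≤ y' * b + z' * c := by
    apply Nat.find_min' hex
    exact ⟨y', z', rfl, hc'.trans hYc⟩
  rw [hYZ]
  rcases lt_or_eq_of_le hmle with h | h
  · exact Or.inl h
  · refine Or.inr ⟨h, ?_⟩
    exact Nat.find_min' hex2 ⟨z', h.symm⟩

lemma good_zero (a b c : ℕ) : Good a b c 0 0 := by
  intro y' z' _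
  rcases Nat.eq_zero_or_pos (y' * b + z' * c) with h | h
  · exact Or.inr ⟨by omega, Nat.zero_le _⟩
  · exact Or.inl (by omega)

lemma good_bound (a b c F : ℕ) (ha : 0 < a)
    (hub : ∀ n, n ∉ AddSubmonoid.closure ({a, b, c} : Set ℕ) → n ≤ F)
    (y z : ℕ) (h : Good a b c y z) : y * b + z * c ≤ F + a := by
  by_contra hV
  push_neg at hV
  set n := y * b + z * c - a with hn
  have hna : n + a = y * b + z * c := by omega
  have hnotmem : n ∉ AddSubmonoid.closure ({a, b, c} : Set ℕ) := by
    intro hmem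
    obtain ⟨x, y', z', hxyz⟩ := (mem_closure_triple a b c n).mp hmem
    have e0 : (x + 1) * a = x * a + a := by ring
    have hcong : y' * b + z' * c ≡ y * b + z * c [MOD a] := by
      have he : y * b + z * c = y' * b + z' * c + (x + 1) * a := by omega
      rw [he]
      exact (Nat.modEq_iff_dvd' (Nat.le_add_right _ _)).mpr
        ⟨x + 1, by rw [Nat.add_sub_cancel_left, Nat.mul_comm]⟩
    rcases h y' z' hcong with h' | ⟨h', _⟩ <;> omega
  have := hub n hnotmem
  omega

/-- If `(y,z)` is good but `(y+1,z)` is not, the minimizer of the class of `(y+1,z)`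
has first coordinate `0`. -/
lemma factA (a b c y z : ℕ) (hg : Good a b c y z) (hng : ¬ Good a b c (y + 1) z) :
    ∃ v, Good a b c 0 v ∧ v * c ≡ (y + 1) * b + z * c [MOD a] ∧
      v * c ≤ (y + 1) * b + z * c := by
  obtain ⟨u, w, hguw, hcong⟩ := good_exists a b c (y + 1) z
  have hle : u * b + w * c ≤ (y + 1) * b + z * c := by
    rcases hguw (y + 1) z hcong.symm with h | ⟨h, _⟩ <;> omega
  rcases Nat.eq_zero_or_pos u with hu0 | hu0
  · subst hu0
    exact ⟨w, hguw, by simpa using hcong, by simpa using hle⟩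
  · exfalso
    obtain ⟨u', rfl⟩ : ∃ u', u = u' + 1 := ⟨u - 1, by omega⟩
    have ee1 : (u' + 1) * b = u' * b + b := by ring
    have ee2 : (y + 1) * b = y * b + b := by ring
    have hcong' : u' * b + w * c ≡ y * b + z * c [MOD a] := by
      have h1 : (u' * b + w * c) + b ≡ (y * b + z * c) + b [MOD a] := by
        have e1 : (u' * b + w * c) + b = (u' + 1) * b + w * c := by ring
        have e2 : (y * b + z * c) + b = (y + 1) * b + z * c := by ring
        rw [e1, e2]; exact hcong
      exact Nat.ModEq.add_right_cancel' b h1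
    rcases hg u' w hcong' with h | ⟨h, hyu⟩
    · have : (u' + 1) * b + w * c = u' * b + w * c + b := by ring
      omega
    · -- tie: values equal, so u'+1 ≤ y+1 from hguw, and y ≤ u', forcing (u,w)=(y+1,z)
      have hveq : (u' + 1) * b + w * c = (y + 1) * b + z * c := by
        have e1 : (u' + 1) * b + w * c = u' * b + w * c + b := by ring
        have e2 : (y + 1) * b + z * c = y * b + z * c + b := by ring
        omega
      rcases hguw (y + 1) z hcong.symm with h2 | ⟨_, h2⟩
      · omega
      · have huy : u' = y := by omega
        subst huy
        have hw : w * c = z * c := by omega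
        have hwz : w = z ∨ c = 0 := by
          rcases Nat.eq_zero_or_pos c with hc | hc
          · exact Or.inr hc
          · exact Or.inl (Nat.eq_of_mul_eq_mul_right hc hw)
        apply hng
        rcases hwz with rfl | hc0
        · exact hguw
        · -- c = 0 : then w*c = z*c anyway
          intro y' z' hcc
          have hcc' : y' * b + z' * c ≡ (u' + 1) * b + w * c [MOD a] := by
            rw [hveq]; exact hcc
          rcases hguw y' z' hcc' with h3 | ⟨h3, h4⟩
          · left; omega
          · right; omega

/-- If `(y,z)` is good but `(y,z+1)` is not, the minimizer of the class of `(y,z+1)`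
has second coordinate `0`. -/
lemma factA' (a b c y z : ℕ) (hg : Good a b c y z) (hng : ¬ Good a b c y (z + 1)) :
    ∃ u, Good a b c u 0 ∧ u * b ≡ y * b + (z + 1) * c [MOD a] ∧
      u * b ≤ y * b + (z + 1) * c := by
  obtain ⟨u, w, hguw, hcong⟩ := good_exists a b c y (z + 1)
  have hle : u * b + w * c ≤ y * b + (z + 1) * c := by
    rcases hguw y (z + 1) hcong.symm with h | ⟨h, _⟩ <;> omega
  rcases Nat.eq_zero_or_pos w with hw0 | hw0
  · subst hw0
    exact ⟨u, hguw, by simpa using hcong, by simpa using hle⟩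
  · exfalso
    obtain ⟨w', rfl⟩ : ∃ w', w = w' + 1 := ⟨w - 1, by omega⟩
    have ee1 : (w' + 1) * c = w' * c + c := by ring
    have ee2 : (z + 1) * c = z * c + c := by ring
    have hcong' : u * b + w' * c ≡ y * b + z * c [MOD a] := by
      have h1 : (u * b + w' * c) + c ≡ (y * b + z * c) + c [MOD a] := by
        have e1 : (u * b + w' * c) + c = u * b + (w' + 1) * c := by ring
        have e2 : (y * b + z * c) + c = y * b + (z + 1) * c := by ring
        rw [e1, e2]; exact hcong
      exact Nat.ModEq.add_right_cancel' c h1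
    rcases hg u w' hcong' with h | ⟨h, hyu⟩
    · have : u * b + (w' + 1) * c = u * b + w' * c + c := by ring
      omega
    · have hveq : u * b + (w' + 1) * c = y * b + (z + 1) * c := by
        have e1 : u * b + (w' + 1) * c = u * b + w' * c + c := by ring
        have e2 : y * b + (z + 1) * c = y * b + z * c + c := by ring
        omega
      rcases hguw y (z + 1) hcong.symm with h2 | ⟨_, h2⟩
      · omega
      · -- u ≤ y and y ≤ u, so u = y, w = z+1: contradiction with hng
        have huy : u = y := by omega
        subst huy
        have hw : (w' + 1) * c = (z + 1) * c := by omega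
        apply hng
        intro y' z' hcc
        have : y' * b + z' * c ≡ u * b + (w' + 1) * c [MOD a] := by
          rw [hveq]; exact hcc
        rcases hguw y' z' this with h3 | ⟨h3, h4⟩
        · left; omega
        · right; omega

/-- Core combinatorial lemma: there is no "middle" maximal good point, i.e. a maximal
good `(y,z)` with some good point strictly to the right and another strictly above. -/
lemma no_middle (a b c y z s₁ t₁ s₂ t₂ : ℕ) (hb : 0 < b) (hc : 0 < c)
    (hg : Good a b c y z) (hr : ¬ Good a b c (y + 1) z) (hu : ¬ Good a b c y (z + 1))
    (h1 : Good a b c s₁ t₁) (hs₁ : y < s₁)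
    (h2 : Good a b c s₂ t₂) (ht₂ : z < t₂) : False := by
  obtain ⟨v, hGv, hCv, hLv⟩ := factA a b c y z hg hr
  obtain ⟨u, hGu, hCu, hLu⟩ := factA' a b c y z hg hu
  obtain ⟨σ₀, hσ₀⟩ : ∃ σ, s₁ = y + 1 + σ := ⟨s₁ - (y + 1), by omega⟩
  obtain ⟨τ₀, hτ₀⟩ : ∃ τ, t₂ = z + 1 + τ := ⟨t₂ - (z + 1), by omega⟩
  -- Step 1: v ≤ z
  have hvz : v ≤ z := by
    by_contra hv
    push_neg at hv
    obtain ⟨δ, hδ, hδ1⟩ : ∃ δ, v = z + δ ∧ 1 ≤ δ := ⟨v - z, by omega, by omega⟩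
    have hCv' : δ * c ≡ (y + 1) * b [MOD a] := by
      have : δ * c + z * c ≡ (y + 1) * b + z * c [MOD a] := by
        have e : δ * c + z * c = v * c := by rw [hδ]; ring
        rw [e]; exact hCv
      exact Nat.ModEq.add_right_cancel' _ this
    have hvexp : v * c = z * c + δ * c := by rw [hδ]; ring
    have hcong1 : σ₀ * b + (t₁ + δ) * c ≡ s₁ * b + t₁ * c [MOD a] := by
      have e1 : σ₀ * b + (t₁ + δ) * c = δ * c + (σ₀ * b + t₁ * c) := by ring
      have e2 : s₁ * b + t₁ * c = (y + 1) * b + (σ₀ * b + t₁ * c) := by rw [hσ₀]; ring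
      rw [e1, e2]
      exact hCv'.add_right _
    rcases h1 σ₀ (t₁ + δ) hcong1 with h | ⟨h, h'⟩
    · -- needs δ*c ≤ (y+1)*b ; from hLv : v*c ≤ (y+1)*b + z*c
      have : δ * c ≤ (y + 1) * b := by omega
      have e1 : σ₀ * b + (t₁ + δ) * c = σ₀ * b + t₁ * c + δ * c := by ring
      have e2 : s₁ * b + t₁ * c = σ₀ * b + t₁ * c + (y + 1) * b := by rw [hσ₀]; ring
      omega
    · omega
  have hLv' : v * c < (y + 1) * b + z * c := by
    have : v * c ≤ z * c := Nat.mul_le_mul_right c hvz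
    have : 0 < (y + 1) * b := by positivity
    omega
  -- Step 2: u ≤ y
  have huy : u ≤ y := by
    by_contra hu'
    push_neg at hu'
    obtain ⟨ε, hε, hε1⟩ : ∃ ε, u = y + ε ∧ 1 ≤ ε := ⟨u - y, by omega, by omega⟩
    have hCu' : ε * b ≡ (z + 1) * c [MOD a] := by
      have : ε * b + y * b ≡ (z + 1) * c + y * b [MOD a] := by
        have e : ε * b + y * b = u * b := by rw [hε]; ring
        have e2 : (z + 1) * c + y * b = y * b + (z + 1) * c := by ring
        rw [e, e2]; exact hCu
      exact Nat.ModEq.add_right_cancel' _ this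
    have huexp : u * b = y * b + ε * b := by rw [hε]; ring
    rcases Nat.lt_or_ge (ε * b) ((z + 1) * c) with hlt | hge
    · -- strict: use (s₂ + ε, τ₀)
      have hcong2 : (s₂ + ε) * b + τ₀ * c ≡ s₂ * b + t₂ * c [MOD a] := by
        have e1 : (s₂ + ε) * b + τ₀ * c = ε * b + (s₂ * b + τ₀ * c) := by ring
        have e2 : s₂ * b + t₂ * c = (z + 1) * c + (s₂ * b + τ₀ * c) := by rw [hτ₀]; ring
        rw [e1, e2]
        exact hCu'.add_right _
      rcases h2 (s₂ + ε) τ₀ hcong2 with h | ⟨h, h'⟩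
      · have e1 : (s₂ + ε) * b + τ₀ * c = s₂ * b + τ₀ * c + ε * b := by ring
        have e2 : s₂ * b + t₂ * c = s₂ * b + τ₀ * c + (z + 1) * c := by rw [hτ₀]; ring
        omega
      · have e1 : (s₂ + ε) * b + τ₀ * c = s₂ * b + τ₀ * c + ε * b := by ring
        have e2 : s₂ * b + t₂ * c = s₂ * b + τ₀ * c + (z + 1) * c := by rw [hτ₀]; ring
        omega
    · -- then u*b ≥ y*b + (z+1)*c so by hLu equality: ε*b = (z+1)*c; use Good u 0 at (y, z+1)
      have heq : ε * b = (z + 1) * c := by omega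
      have hveq : y * b + (z + 1) * c = u * b + 0 * c := by
        rw [huexp, heq]; ring
      rcases hGu y (z + 1) (hveq ▸ Nat.ModEq.refl _) with h | ⟨h, h'⟩
      · omega
      · omega
  have hLu' : u * b < y * b + (z + 1) * c := by
    have : u * b ≤ y * b := Nat.mul_le_mul_right b huy
    have : 0 < (z + 1) * c := by positivity
    omega
  -- Step 3: (u+1)*b ≡ (v+1)*c [MOD a], then trichotomy
  have hC3 : (u + 1) * b ≡ (v + 1) * c [MOD a] := by
    have e1 : u * b + ((y + 1) * b + z * c) = (u + 1) * b + (y * b + z * c) := by ring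
    have e2 : (y * b + (z + 1) * c) + v * c = (v + 1) * c + (y * b + z * c) := by ring
    have step : (u + 1) * b + (y * b + z * c) ≡ (v + 1) * c + (y * b + z * c) [MOD a] := by
      rw [← e1, ← e2]
      exact hCu.add hCv.symm
    exact Nat.ModEq.add_right_cancel' _ step
  obtain ⟨σ₁, hσ₁⟩ : ∃ σ, s₁ = u + 1 + σ := ⟨s₁ - (u + 1), by omega⟩
  have hcongR : σ₁ * b + (t₁ + (v + 1)) * c ≡ s₁ * b + t₁ * c [MOD a] := by
    have e1 : σ₁ * b + (t₁ + (v + 1)) * c = (v + 1) * c + (σ₁ * b + t₁ * c) := by ring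
    have e2 : s₁ * b + t₁ * c = (u + 1) * b + (σ₁ * b + t₁ * c) := by rw [hσ₁]; ring
    rw [e1, e2]
    exact hC3.symm.add_right _
  rcases Nat.lt_trichotomy ((u + 1) * b) ((v + 1) * c) with hlt | heq | hgt
  · -- use (s₂ + (u+1), t₂ - (v+1)) ; t₂ ≥ z+1 ≥ v+1
    obtain ⟨τ₁, hτ₁⟩ : ∃ τ, t₂ = v + 1 + τ := ⟨t₂ - (v + 1), by omega⟩
    have hcong2 : (s₂ + (u + 1)) * b + τ₁ * c ≡ s₂ * b + t₂ * c [MOD a] := by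
      have e1 : (s₂ + (u + 1)) * b + τ₁ * c = (u + 1) * b + (s₂ * b + τ₁ * c) := by ring
      have e2 : s₂ * b + t₂ * c = (v + 1) * c + (s₂ * b + τ₁ * c) := by rw [hτ₁]; ring
      rw [e1, e2]
      exact hC3.add_right _
    rcases h2 (s₂ + (u + 1)) τ₁ hcong2 with h | ⟨h, h'⟩
    · have e1 : (s₂ + (u + 1)) * b + τ₁ * c = s₂ * b + τ₁ * c + (u + 1) * b := by ring
      have e2 : s₂ * b + t₂ * c = s₂ * b + τ₁ * c + (v + 1) * c := by rw [hτ₁]; ring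
      omega
    · have e1 : (s₂ + (u + 1)) * b + τ₁ * c = s₂ * b + τ₁ * c + (u + 1) * b := by ring
      have e2 : s₂ * b + t₂ * c = s₂ * b + τ₁ * c + (v + 1) * c := by rw [hτ₁]; ring
      omega
  · -- equal: lex contradiction at (s₁, t₁)
    rcases h1 σ₁ (t₁ + (v + 1)) hcongR with h | ⟨h, h'⟩
    · have e1 : σ₁ * b + (t₁ + (v + 1)) * c = σ₁ * b + t₁ * c + (v + 1) * c := by ring
      have e2 : s₁ * b + t₁ * c = σ₁ * b + t₁ * c + (u + 1) * b := by rw [hσ₁]; ring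
      omega
    · omega
  · -- strict decrease at (s₁, t₁)
    rcases h1 σ₁ (t₁ + (v + 1)) hcongR with h | ⟨h, h'⟩
    · have e1 : σ₁ * b + (t₁ + (v + 1)) * c = σ₁ * b + t₁ * c + (v + 1) * c := by ring
      have e2 : s₁ * b + t₁ * c = σ₁ * b + t₁ * c + (u + 1) * b := by rw [hσ₁]; ring
      omega
    · omega

/-- every residue class mod `a` is attained by some `y*b + z*c` -/
lemma attain (a b c : ℕ) (ha : 0 < a) (hgcd : Nat.gcd (Nat.gcd a b) c = 1) (r : ℕ) :
    ∃ y z : ℕ, y * b + z * c ≡ r [MOD a] := by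
  set d := Nat.gcd a b with hd
  have hbez1 : (d : ℤ) = a * Nat.gcdA a b + b * Nat.gcdB a b := Nat.gcd_eq_gcd_ab a b
  have hbez2 : (1 : ℤ) = d * Nat.gcdA d c + c * Nat.gcdB d c := by
    have := Nat.gcd_eq_gcd_ab d c
    rw [hgcd] at this
    exact_mod_cast this
  set p := Nat.gcdA a b
  set q := Nat.gcdB a b
  set s := Nat.gcdA d c
  set t := Nat.gcdB d c
  have key : (r : ℤ) = a * (p * s * r) + b * (q * s * r) + c * (t * r) := by
    have : (1 : ℤ) = a * (p * s) + b * (q * s) + c * t := by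
      calc (1 : ℤ) = d * s + c * t := hbez2
        _ = (a * p + b * q) * s + c * t := by rw [← hbez1]
        _ = a * (p * s) + b * (q * s) + c * t := by ring
    calc (r : ℤ) = 1 * r := by ring
      _ = (a * (p * s) + b * (q * s) + c * t) * r := by rw [← this]
      _ = a * (p * s * r) + b * (q * s * r) + c * (t * r) := by ring
  set Y : ℤ := (q * s * r) % a with hYdef
  set Z : ℤ := (t * r) % a with hZdef
  have haZ : (0 : ℤ) < a := by exact_mod_cast ha
  have hY0 : 0 ≤ Y := Int.emod_nonneg _ (by omega)
  have hZ0 : 0 ≤ Z := Int.emod_nonneg _ (by omega)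
  refine ⟨Y.toNat, Z.toNat, ?_⟩
  have hYc : (Y.toNat : ℤ) = Y := Int.toNat_of_nonneg hY0
  have hZc : (Z.toNat : ℤ) = Z := Int.toNat_of_nonneg hZ0
  -- show the Int.ModEq version
  have hmod : ((Y.toNat * b + Z.toNat * c : ℕ) : ℤ) ≡ (r : ℤ) [ZMOD (a : ℤ)] := by
    push_cast
    rw [hYc, hZc]
    have h1 : Y ≡ q * s * r [ZMOD (a : ℤ)] := Int.emod_emod_of_dvd _ dvd_rfl
    have h2 : Z ≡ t * r [ZMOD (a : ℤ)] := Int.emod_emod_of_dvd _ dvd_rfl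
    have h3 : Y * b + Z * c ≡ (q * s * r) * b + (t * r) * c [ZMOD (a : ℤ)] :=
      (h1.mul_right b).add (h2.mul_right c)
    refine h3.trans ?_
    have : (q * s * r) * b + (t * r) * c ≡ (q * s * r) * b + (t * r) * c +
        a * (p * s * r) [ZMOD (a : ℤ)] := by
      exact (Int.modEq_iff_dvd.mpr ⟨p * s * r, by ring⟩)
    refine this.trans ?_
    have hfin : (q * s * r) * b + (t * r) * c + a * (p * s * r) = (r : ℤ) := by
      linear_combination -key
    rw [hfin]
  rw [Nat.modEq_iff_dvd]
  exact hmod.dvd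

end DavisonAux

set_option maxHeartbeats 1000000 in
/-- Davison's lower bound: for `a₁, a₂, a₃ ≥ 2` with `gcd(a₁, a₂, a₃) = 1`,
the modified Frobenius number `f = F(a₁,a₂,a₃) + a₁ + a₂ + a₃` satisfies
`f ≥ √(3·a₁·a₂·a₃)`. -/
theorem davison_lower_bound (a₁ a₂ a₃ : ℕ) (h1 : 2 ≤ a₁) (h2 : 2 ≤ a₂)
    (h3 : 2 ≤ a₃) (hgcd : Nat.gcd (Nat.gcd a₁ a₂) a₃ = 1)
    (F : ℕ)
    (hF : IsGreatest {n : ℕ | n ∉ AddSubmonoid.closure ({a₁, a₂, a₃} : Set ℕ)} F) :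
    Real.sqrt (3 * a₁ * a₂ * a₃) ≤ (F : ℝ) + a₁ + a₂ + a₃ := by
  classical
  open DavisonAux in
  have ha : 0 < a₁ := by omega
  have hb : 0 < a₂ := by omega
  have hc : 0 < a₃ := by omega
  have hub : ∀ n, n ∉ AddSubmonoid.closure ({a₁, a₂, a₃} : Set ℕ) → n ≤ F :=
    fun n hn => hF.2 hn
  set B := F + a₁ with hB
  have hbound : ∀ y z, Good a₁ a₂ a₃ y z → y * a₂ + z * a₃ ≤ B :=
    fun y z h => good_bound a₁ a₂ a₃ F ha hub y z h
  have hcoord : ∀ y z, Good a₁ a₂ a₃ y z → y ≤ B ∧ z ≤ B := by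
    intro y z h
    have h0 := hbound y z h
    have h1 : y * 1 ≤ y * a₂ := Nat.mul_le_mul_left y hb
    have h2 : z * 1 ≤ z * a₃ := Nat.mul_le_mul_left z hc
    omega
  set T : Finset (ℕ × ℕ) := (Finset.range (B + 1) ×ˢ Finset.range (B + 1)).filter
      (fun p => Good a₁ a₂ a₃ p.1 p.2) with hT
  have hmemT : ∀ y z, Good a₁ a₂ a₃ y z → (y, z) ∈ T := by
    intro y z h
    have hco := hcoord y z h
    exact Finset.mem_filter.mpr ⟨Finset.mem_product.mpr
      ⟨Finset.mem_range.mpr (by omega), Finset.mem_range.mpr (by omega)⟩, h⟩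
  have hGoodT : ∀ p : ℕ × ℕ, p ∈ T → Good a₁ a₂ a₃ p.1 p.2 := by
    intro p hp
    exact (Finset.mem_filter.mp hp).2
  have hTne : T.Nonempty := ⟨(0, 0), hmemT 0 0 (good_zero a₁ a₂ a₃)⟩
  -- extreme points
  set y₁ := (T.image Prod.fst).max' (hTne.image _) with hy₁
  have hy₁max : ∀ y z, Good a₁ a₂ a₃ y z → y ≤ y₁ := by
    intro y z h
    have hm : y ∈ T.image Prod.fst := Finset.mem_image.mpr ⟨(y, z), hmemT y z h, rfl⟩
    exact Finset.le_max' _ y hm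
  have hy₁mem : ∃ p ∈ T, p.1 = y₁ := by
    have := (T.image Prod.fst).max'_mem (hTne.image _)
    rw [← hy₁] at this
    obtain ⟨p, hp, hpe⟩ := Finset.mem_image.mp this
    exact ⟨p, hp, hpe⟩
  set T₁ := T.filter (fun p => p.1 = y₁) with hT₁
  have hT₁ne : T₁.Nonempty := by
    obtain ⟨p, hp, hpe⟩ := hy₁mem
    exact ⟨p, Finset.mem_filter.mpr ⟨hp, hpe⟩⟩
  set z₁ := (T₁.image Prod.snd).max' (hT₁ne.image _) with hz₁
  have hz₁fib : ∀ z, Good a₁ a₂ a₃ y₁ z → z ≤ z₁ := by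
    intro z h
    have hmem : ((y₁, z) : ℕ × ℕ) ∈ T₁ := Finset.mem_filter.mpr ⟨hmemT y₁ z h, rfl⟩
    have hm : z ∈ T₁.image Prod.snd := Finset.mem_image.mpr ⟨(y₁, z), hmem, rfl⟩
    exact Finset.le_max' _ z hm
  have G₁ : Good a₁ a₂ a₃ y₁ z₁ := by
    have := (T₁.image Prod.snd).max'_mem (hT₁ne.image _)
    rw [← hz₁] at this
    obtain ⟨p, hp, hpe⟩ := Finset.mem_image.mp this
    have hp1 := (Finset.mem_filter.mp hp).2
    have hpT := (Finset.mem_filter.mp hp).1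
    have hgp := hGoodT p hpT
    rwa [hp1, hpe] at hgp
  set z₂ := (T.image Prod.snd).max' (hTne.image _) with hz₂
  have hz₂max : ∀ y z, Good a₁ a₂ a₃ y z → z ≤ z₂ := by
    intro y z h
    have hm : z ∈ T.image Prod.snd := Finset.mem_image.mpr ⟨(y, z), hmemT y z h, rfl⟩
    exact Finset.le_max' _ z hm
  have hz₂mem : ∃ p ∈ T, p.2 = z₂ := by
    have := (T.image Prod.snd).max'_mem (hTne.image _)
    rw [← hz₂] at this
    obtain ⟨p, hp, hpe⟩ := Finset.mem_image.mp this
    exact ⟨p, hp, hpe⟩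
  set T₂ := T.filter (fun p => p.2 = z₂) with hT₂
  have hT₂ne : T₂.Nonempty := by
    obtain ⟨p, hp, hpe⟩ := hz₂mem
    exact ⟨p, Finset.mem_filter.mpr ⟨hp, hpe⟩⟩
  set y₂ := (T₂.image Prod.fst).max' (hT₂ne.image _) with hy₂
  have hy₂fib : ∀ y, Good a₁ a₂ a₃ y z₂ → y ≤ y₂ := by
    intro y h
    have hmem : ((y, z₂) : ℕ × ℕ) ∈ T₂ := Finset.mem_filter.mpr ⟨hmemT y z₂ h, rfl⟩
    have hm : y ∈ T₂.image Prod.fst := Finset.mem_image.mpr ⟨(y, z₂), hmem, rfl⟩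
    exact Finset.le_max' _ y hm
  have G₂ : Good a₁ a₂ a₃ y₂ z₂ := by
    have := (T₂.image Prod.fst).max'_mem (hT₂ne.image _)
    rw [← hy₂] at this
    obtain ⟨p, hp, hpe⟩ := Finset.mem_image.mp this
    have hp1 := (Finset.mem_filter.mp hp).2
    have hpT := (Finset.mem_filter.mp hp).1
    have hgp := hGoodT p hpT
    rwa [hpe, hp1] at hgp
  -- ascend to a maximal good point
  have ascend : ∀ k y z, B + 1 ≤ y + z + k → Good a₁ a₂ a₃ y z →
      ∃ Y Z, y ≤ Y ∧ z ≤ Z ∧ Good a₁ a₂ a₃ Y Z ∧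
        ¬ Good a₁ a₂ a₃ (Y + 1) Z ∧ ¬ Good a₁ a₂ a₃ Y (Z + 1) := by
    intro k
    induction k with
    | zero =>
      intro y z hk h
      exfalso
      have h0 := hbound y z h
      have h1 : y * 1 ≤ y * a₂ := Nat.mul_le_mul_left y hb
      have h2 : z * 1 ≤ z * a₃ := Nat.mul_le_mul_left z hc
      omega
    | succ k ih =>
      intro y z hk h
      by_cases hr : Good a₁ a₂ a₃ (y + 1) z
      · obtain ⟨Y, Z, hh1, hh2, hh3, hh4, hh5⟩ := ih (y + 1) z (by omega) hr
        exact ⟨Y, Z, by omega, hh2, hh3, hh4, hh5⟩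
      · by_cases hu : Good a₁ a₂ a₃ y (z + 1)
        · obtain ⟨Y, Z, hh1, hh2, hh3, hh4, hh5⟩ := ih y (z + 1) (by omega) hu
          exact ⟨Y, Z, hh1, by omega, hh3, hh4, hh5⟩
        · exact ⟨y, z, le_rfl, le_rfl, h, hr, hu⟩
  -- covering
  have hcover : ∀ s t, Good a₁ a₂ a₃ s t → t ≤ z₁ ∨ s ≤ y₂ := by
    intro s t hst
    by_contra hcon
    push_neg at hcon
    obtain ⟨hz₁t, hy₂s⟩ := hcon
    obtain ⟨S, T', hS, hT', hGm, hnr, hnu⟩ := ascend (B + 1) s t (by omega) hst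
    have hSle : S ≤ y₁ := hy₁max _ _ hGm
    have hT'le : T' ≤ z₂ := hz₂max _ _ hGm
    have hSlt : S < y₁ := by
      rcases Nat.lt_or_ge S y₁ with h | h
      · exact h
      · exfalso
        have hSeq : S = y₁ := by omega
        have := hz₁fib T' (hSeq ▸ hGm)
        omega
    have hT'lt : T' < z₂ := by
      rcases Nat.lt_or_ge T' z₂ with h | h
      · exact h
      · exfalso
        have hTeq : T' = z₂ := by omega
        have := hy₂fib S (hTeq ▸ hGm)
        omega
    exact no_middle a₁ a₂ a₃ S T' y₁ z₁ y₂ z₂ hb hc hGm hnr hnu G₁ hSlt G₂ hT'lt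
  -- counting
  have hch : ∀ r : ℕ, ∃ p : ℕ × ℕ, Good a₁ a₂ a₃ p.1 p.2 ∧
      p.1 * a₂ + p.2 * a₃ ≡ r [MOD a₁] := by
    intro r
    obtain ⟨y₀, z₀, h₀⟩ := attain a₁ a₂ a₃ ha hgcd r
    obtain ⟨y, z, hg, hcong⟩ := good_exists a₁ a₂ a₃ y₀ z₀
    exact ⟨(y, z), hg, hcong.trans h₀⟩
  set g : ℕ → ℕ × ℕ := fun r => (hch r).choose with hgdef
  have hg1 : ∀ r, Good a₁ a₂ a₃ (g r).1 (g r).2 := fun r => (hch r).choose_spec.1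
  have hg2 : ∀ r, (g r).1 * a₂ + (g r).2 * a₃ ≡ r [MOD a₁] := fun r => (hch r).choose_spec.2
  set R₁ : Finset (ℕ × ℕ) := Finset.range (y₁ + 1) ×ˢ Finset.range (z₁ + 1) with hR₁
  set R₂ : Finset (ℕ × ℕ) := Finset.range (y₂ + 1) ×ˢ Finset.range (z₂ + 1) with hR₂
  have hmaps : ∀ r ∈ Finset.range a₁, g r ∈ R₁ ∪ R₂ := by
    intro r _
    have hcov := hcover (g r).1 (g r).2 (hg1 r)
    have hh1 : (g r).1 ≤ y₁ := hy₁max _ _ (hg1 r)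
    have hh2 : (g r).2 ≤ z₂ := hz₂max _ _ (hg1 r)
    have hh3 : (g r).2 ≤ z₁ ∨ (g r).1 ≤ y₂ := hcov
    rw [Finset.mem_union, hR₁, hR₂]
    rcases hh3 with h | h
    · exact Or.inl (Finset.mem_product.mpr
        ⟨Finset.mem_range.mpr (by omega), Finset.mem_range.mpr (by omega)⟩)
    · exact Or.inr (Finset.mem_product.mpr
        ⟨Finset.mem_range.mpr (by omega), Finset.mem_range.mpr (by omega)⟩)
  have hinj : Set.InjOn g (Finset.range a₁) := by
    intro r₁ hr₁ r₂ hr₂ heq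
    have e1 := hg2 r₁
    have e2 := hg2 r₂
    rw [heq] at e1
    have hmm : r₁ ≡ r₂ [MOD a₁] := e1.symm.trans e2
    have hr₁' : r₁ < a₁ := Finset.mem_range.mp hr₁
    have hr₂' : r₂ < a₁ := Finset.mem_range.mp hr₂
    have : r₁ % a₁ = r₂ % a₁ := hmm
    rwa [Nat.mod_eq_of_lt hr₁', Nat.mod_eq_of_lt hr₂'] at this
  have hcard1 : a₁ ≤ (R₁ ∪ R₂).card := by
    calc a₁ = (Finset.range a₁).card := (Finset.card_range a₁).symm
      _ ≤ (R₁ ∪ R₂).card := Finset.card_le_card_of_injOn g hmaps hinj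
  have hy₂y₁ : y₂ ≤ y₁ := hy₁max _ _ G₂
  have hz₁z₂ : z₁ ≤ z₂ := hz₂max _ _ G₁
  have hinter : R₁ ∩ R₂ = Finset.range (y₂ + 1) ×ˢ Finset.range (z₁ + 1) := by
    ext ⟨i, j⟩
    simp only [Finset.mem_inter, hR₁, hR₂, Finset.mem_product, Finset.mem_range]
    omega
  have hcard2 : (R₁ ∪ R₂).card + (y₂ + 1) * (z₁ + 1) =
      (y₁ + 1) * (z₁ + 1) + (y₂ + 1) * (z₂ + 1) := by
    have hci := Finset.card_union_add_card_inter R₁ R₂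
    rw [hinter] at hci
    simp only [hR₁, hR₂, Finset.card_product, Finset.card_range] at hci ⊢
    omega
  have hcount : a₁ + (y₂ + 1) * (z₁ + 1) ≤
      (y₁ + 1) * (z₁ + 1) + (y₂ + 1) * (z₂ + 1) := by omega
  have hV₁ : y₁ * a₂ + z₁ * a₃ ≤ F + a₁ := hbound _ _ G₁
  have hV₂ : y₂ * a₂ + z₂ * a₃ ≤ F + a₁ := hbound _ _ G₂
  have hV₁' : (y₁ + 1) * a₂ + (z₁ + 1) * a₃ ≤ F + a₁ + a₂ + a₃ := by
    have e1 : (y₁ + 1) * a₂ = y₁ * a₂ + a₂ := by ring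
    have e2 : (z₁ + 1) * a₃ = z₁ * a₃ + a₃ := by ring
    omega
  have hV₂' : (y₂ + 1) * a₂ + (z₂ + 1) * a₃ ≤ F + a₁ + a₂ + a₃ := by
    have e1 : (y₂ + 1) * a₂ = y₂ * a₂ + a₂ := by ring
    have e2 : (z₂ + 1) * a₃ = z₂ * a₃ + a₃ := by ring
    omega
  -- the real-number finish
  set fR : ℝ := (F : ℝ) + a₁ + a₂ + a₃ with hfR
  set A : ℝ := ((y₁ : ℝ) + 1) * a₂ with hA
  set Bb : ℝ := ((z₁ : ℝ) + 1) * a₃ with hBb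
  set C : ℝ := ((y₂ : ℝ) + 1) * a₂ with hC
  set Dd : ℝ := ((z₂ : ℝ) + 1) * a₃ with hDd
  have hAB : A + Bb ≤ fR := by
    rw [hA, hBb, hfR]
    exact_mod_cast hV₁'
  have hCD : C + Dd ≤ fR := by
    rw [hC, hDd, hfR]
    exact_mod_cast hV₂'
  have hcountR : (a₁ : ℝ) + ((y₂ : ℝ) + 1) * ((z₁ : ℝ) + 1) ≤
      ((y₁ : ℝ) + 1) * ((z₁ : ℝ) + 1) + ((y₂ : ℝ) + 1) * ((z₂ : ℝ) + 1) := by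
    exact_mod_cast hcount
  have habc : (a₁ : ℝ) * a₂ * a₃ ≤ A * Bb + C * Dd - C * Bb := by
    have hmul := mul_le_mul_of_nonneg_right hcountR
      (show (0 : ℝ) ≤ (a₂ : ℝ) * a₃ by positivity)
    have e : A * Bb + C * Dd - C * Bb =
        (((y₁ : ℝ) + 1) * ((z₁ : ℝ) + 1) + ((y₂ : ℝ) + 1) * ((z₂ : ℝ) + 1) -
          ((y₂ : ℝ) + 1) * ((z₁ : ℝ) + 1)) * ((a₂ : ℝ) * a₃) := by
      rw [hA, hBb, hC, hDd]; ring
    rw [e]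
    ring_nf
    ring_nf at hmul
    linarith
  have hB0 : (0 : ℝ) ≤ Bb := by rw [hBb]; positivity
  have hC0 : (0 : ℝ) ≤ C := by rw [hC]; positivity
  have h3 : 3 * (a₁ : ℝ) * a₂ * a₃ ≤ fR ^ 2 := by
    have k1 : (0 : ℝ) ≤ Bb * (fR - A - Bb) :=
      mul_nonneg hB0 (by linarith : (0 : ℝ) ≤ fR - A - Bb)
    have k2 : (0 : ℝ) ≤ C * (fR - C - Dd) :=
      mul_nonneg hC0 (by linarith : (0 : ℝ) ≤ fR - C - Dd)
    have k3 : (0 : ℝ) ≤ (2 * fR - 3 * Bb - 3 * C) ^ 2 := sq_nonneg _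
    have k4 : (0 : ℝ) ≤ (Bb - C) ^ 2 := sq_nonneg _
    nlinarith [k1, k2, k3, k4, habc]
  have hf0 : (0 : ℝ) ≤ fR := by rw [hfR]; positivity
  calc Real.sqrt (3 * (a₁ : ℝ) * a₂ * a₃) ≤ Real.sqrt (fR ^ 2) := Real.sqrt_le_sqrt h3
    _ = fR := Real.sqrt_sq hf0
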